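/- For λ ≠ −1 and σ = 1 + 4λ, the function Y(z) = Y₀·z^(λ/(1+λ)) with Y₀ > 0 and z > 0 satisfies Y'·Y''' − (Y'' + (Y')^(2+λ))·Y'' − Y²·(Y')^(σ+3) = 0 if and only if λ^(−2)·(λY₀)^(4+4λ) − (λY₀)^(1+λ)·(1+λ)^(3λ) − (1+λ)^(1+4λ) = 0. -/

import Mathlib

lemma deriv_const_mul_rpow' (K c : ℝ) {z : ℝ} (hz : 0 < z) :
    deriv (fun z : ℝ => K * z ^ c) z = (K * c) * z ^ (c - 1) := by
  have h := (Real.hasDerivAt_rpow_const (x := z) (p := c) (Or.inl hz.ne')).const_mul K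
  rw [h.deriv]; ring

lemma rpow_two' (w : ℝ) : w ^ (2 : ℝ) = w ^ (2 : ℕ) := by
  rw [show (2:ℝ) = ((2:ℕ):ℝ) by norm_num, Real.rpow_natCast]

lemma rpow_three' (w : ℝ) : w ^ (3 : ℝ) = w ^ (3 : ℕ) := by
  rw [show (3:ℝ) = ((3:ℕ):ℝ) by norm_num, Real.rpow_natCast]

lemma rpow_four' (w : ℝ) : w ^ (4 : ℝ) = w ^ (4 : ℕ) := by
  rw [show (4:ℝ) = ((4:ℕ):ℝ) by norm_num, Real.rpow_natCast]

/-- `Y(z) = Y₀ z^(λ/(1+λ))` solves the autonomous third-order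
equation `Y' Y''' − (Y'' + (Y')^(2+λ)) Y'' − Y² (Y')^(σ+3) = 0` on `(0,∞)`
(with `σ = 1 + 4λ`) iff
`λ⁻² (λY₀)^(4+4λ) − (λY₀)^(1+λ) (1+λ)^(3λ) − (1+λ)^(1+4λ) = 0`. -/
theorem third_order_power_solution
    (l σ Y₀ : ℝ) (hl0 : l ≠ 0) (hl : l ≠ -1) (hσ : σ = 1 + 4 * l)
    (hY₀ : 0 < Y₀) (hlY₀ : 0 < l * Y₀) (hl1 : 0 < 1 + l) :
    (∀ z : ℝ, 0 < z →
        deriv (fun z : ℝ => Y₀ * z ^ (l / (1 + l))) z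
            * deriv (deriv (deriv (fun z : ℝ => Y₀ * z ^ (l / (1 + l))))) z
          - (deriv (deriv (fun z : ℝ => Y₀ * z ^ (l / (1 + l)))) z
              + (deriv (fun z : ℝ => Y₀ * z ^ (l / (1 + l))) z) ^ (2 + l))
            * deriv (deriv (fun z : ℝ => Y₀ * z ^ (l / (1 + l)))) z
          - (Y₀ * z ^ (l / (1 + l))) ^ 2
            * (deriv (fun z : ℝ => Y₀ * z ^ (l / (1 + l))) z) ^ (σ + 3) = 0)
      ↔ (l * Y₀) ^ (4 + 4 * l) / l ^ 2
          - (l * Y₀) ^ (1 + l) * (1 + l) ^ (3 * l)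
          - (1 + l) ^ (1 + 4 * l) = 0 := by
  subst hσ
  set a : ℝ := l / (1 + l) with ha
  have hune : (1 + l) ≠ 0 := hl1.ne'
  have hA : 0 < Y₀ * a := by
    have h : Y₀ * a = (l * Y₀) / (1 + l) := by rw [ha]; field_simp
    rw [h]; positivity
  -- first derivative
  have hd1 : ∀ z : ℝ, 0 < z →
      deriv (fun z : ℝ => Y₀ * z ^ a) z = (Y₀ * a) * z ^ (a - 1) := by
    intro z hz; exact deriv_const_mul_rpow' Y₀ a hz
  -- second derivative
  have hd2 : ∀ z : ℝ, 0 < z →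
      deriv (deriv (fun z : ℝ => Y₀ * z ^ a)) z = (Y₀ * a * (a - 1)) * z ^ (a - 2) := by
    intro z hz
    have he : deriv (fun z : ℝ => Y₀ * z ^ a) =ᶠ[nhds z]
        (fun w : ℝ => (Y₀ * a) * w ^ (a - 1)) := by
      filter_upwards [Ioi_mem_nhds hz] with w hw using hd1 w hw
    rw [he.deriv_eq, deriv_const_mul_rpow' _ _ hz,
      show a - 1 - 1 = a - 2 by ring, mul_assoc]
  -- third derivative
  have hd3 : ∀ z : ℝ, 0 < z →
      deriv (deriv (deriv (fun z : ℝ => Y₀ * z ^ a))) z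
        = (Y₀ * a * (a - 1) * (a - 2)) * z ^ (a - 3) := by
    intro z hz
    have he : deriv (deriv (fun z : ℝ => Y₀ * z ^ a)) =ᶠ[nhds z]
        (fun w : ℝ => (Y₀ * a * (a - 1)) * w ^ (a - 2)) := by
      filter_upwards [Ioi_mem_nhds hz] with w hw using hd2 w hw
    rw [he.deriv_eq, deriv_const_mul_rpow' _ _ hz,
      show a - 2 - 1 = a - 3 by ring, mul_assoc]
  -- the constant
  set C : ℝ := (Y₀ * a) * (Y₀ * a * (a - 1) * (a - 2))
      - ((Y₀ * a * (a - 1)) + (Y₀ * a) ^ (2 + l)) * (Y₀ * a * (a - 1))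
      - Y₀ ^ 2 * (Y₀ * a) ^ (1 + 4 * l + 3) with hC
  -- the LHS of the ODE equals z^(2a-4) * C
  have hLHS : ∀ z : ℝ, 0 < z →
      deriv (fun z : ℝ => Y₀ * z ^ a) z
          * deriv (deriv (deriv (fun z : ℝ => Y₀ * z ^ a))) z
        - (deriv (deriv (fun z : ℝ => Y₀ * z ^ a)) z
            + (deriv (fun z : ℝ => Y₀ * z ^ a) z) ^ (2 + l))
          * deriv (deriv (fun z : ℝ => Y₀ * z ^ a)) z
        - (Y₀ * z ^ a) ^ 2
          * (deriv (fun z : ℝ => Y₀ * z ^ a) z) ^ (1 + 4 * l + 3)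
        = z ^ (2 * a - 4) * C := by
    intro z hz
    rw [hd1 z hz, hd2 z hz, hd3 z hz]
    have hZ : (0:ℝ) < z ^ a := Real.rpow_pos_of_pos hz a
    have e1 : ((Y₀ * a) * z ^ (a - 1)) ^ (2 + l)
        = (Y₀ * a) ^ (2 + l) * z ^ (a - 2) := by
      rw [Real.mul_rpow hA.le (Real.rpow_pos_of_pos hz _).le, ← Real.rpow_mul hz.le,
        show (a - 1) * (2 + l) = a - 2 by rw [ha]; field_simp; ring]
    have e2 : ((Y₀ * a) * z ^ (a - 1)) ^ (1 + 4 * l + 3)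
        = (Y₀ * a) ^ (1 + 4 * l + 3) * z ^ (-4 : ℝ) := by
      rw [Real.mul_rpow hA.le (Real.rpow_pos_of_pos hz _).le, ← Real.rpow_mul hz.le,
        show (a - 1) * (1 + 4 * l + 3) = (-4 : ℝ) by rw [ha]; field_simp; ring]
    rw [e1, e2]
    have f1 : z ^ (a - 1) = z ^ a / z := by
      rw [Real.rpow_sub hz, Real.rpow_one]
    have f2 : z ^ (a - 2) = z ^ a / z ^ (2:ℕ) := by
      rw [Real.rpow_sub hz, rpow_two']
    have f3 : z ^ (a - 3) = z ^ a / z ^ (3:ℕ) := by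
      rw [Real.rpow_sub hz, rpow_three']
    have f4 : z ^ (2 * a - 4) = (z ^ a) ^ (2:ℕ) / z ^ (4:ℕ) := by
      rw [show 2 * a - 4 = a * 2 - 4 by ring, Real.rpow_sub hz,
        Real.rpow_mul hz.le, rpow_two', rpow_four']
    have f5 : z ^ (-4 : ℝ) = 1 / z ^ (4:ℕ) := by
      rw [show (-4 : ℝ) = -(4:ℝ) by norm_num, Real.rpow_neg hz.le, rpow_four',
        inv_eq_one_div]
    rw [f1, f2, f3, f4, f5, hC]
    field_simp
  -- reduce the ODE condition to C = 0
  have step1 : (∀ z : ℝ, 0 < z →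
      deriv (fun z : ℝ => Y₀ * z ^ a) z
          * deriv (deriv (deriv (fun z : ℝ => Y₀ * z ^ a))) z
        - (deriv (deriv (fun z : ℝ => Y₀ * z ^ a)) z
            + (deriv (fun z : ℝ => Y₀ * z ^ a) z) ^ (2 + l))
          * deriv (deriv (fun z : ℝ => Y₀ * z ^ a)) z
        - (Y₀ * z ^ a) ^ 2
          * (deriv (fun z : ℝ => Y₀ * z ^ a) z) ^ (1 + 4 * l + 3) = 0) ↔ C = 0 := by
    constructor
    · intro h
      have h1 := h 1 one_pos
      rw [hLHS 1 one_pos, Real.one_rpow, one_mul] at h1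
      exact h1
    · intro h z hz
      rw [hLHS z hz, h, mul_zero]
  rw [step1]
  clear hLHS step1 hd1 hd2 hd3
  -- now the algebraic equivalence
  have hAe : Y₀ * a = (l * Y₀) / (1 + l) := by rw [ha]; field_simp
  have g1 : (Y₀ * a) ^ (2 + l)
      = ((l * Y₀) * (l * Y₀) ^ (1 + l)) / ((1 + l) ^ (2:ℕ) * (1 + l) ^ l) := by
    rw [hAe, Real.div_rpow hlY₀.le hl1.le]
    rw [show (2 + l : ℝ) = 1 + (1 + l) by ring, Real.rpow_add hlY₀, Real.rpow_one,
      show (1 + (1 + l) : ℝ) = 2 + l by ring, Real.rpow_add hl1, rpow_two']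
  have g2 : (Y₀ * a) ^ (1 + 4 * l + 3)
      = (l * Y₀) ^ (4 + 4 * l) / ((1 + l) ^ (4:ℕ) * ((1 + l) ^ l) ^ (4:ℕ)) := by
    rw [hAe, Real.div_rpow hlY₀.le hl1.le,
      show (1 + 4 * l + 3 : ℝ) = 4 + 4 * l by ring]
    congr 1
    rw [show (4 + 4 * l : ℝ) = 4 + l * 4 by ring, Real.rpow_add hl1,
      Real.rpow_mul hl1.le, rpow_four', rpow_four']
  have g3 : (1 + l) ^ (3 * l) = ((1 + l) ^ l) ^ (3:ℕ) := by
    rw [show (3 * l : ℝ) = l * 3 by ring, Real.rpow_mul hl1.le, rpow_three']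
  have g4 : (1 + l) ^ (1 + 4 * l) = (1 + l) * ((1 + l) ^ l) ^ (4:ℕ) := by
    rw [show (1 + 4 * l : ℝ) = 1 + l * 4 by ring, Real.rpow_add hl1, Real.rpow_one,
      Real.rpow_mul hl1.le, rpow_four']
  have hrpos : (0:ℝ) < (1 + l) ^ l := Real.rpow_pos_of_pos hl1 l
  -- key identity
  have key : (l * Y₀) ^ (4 + 4 * l) / l ^ 2
        - (l * Y₀) ^ (1 + l) * (1 + l) ^ (3 * l) - (1 + l) ^ (1 + 4 * l)
      = (-((1 + l) ^ (4:ℕ) * ((1 + l) ^ l) ^ (4:ℕ)) / (l * Y₀) ^ (2:ℕ)) * C := by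
    rw [hC, g1, g2, g3, g4, hAe, ha]
    generalize (l * Y₀) ^ (4 + 4 * l) = q
    generalize (l * Y₀) ^ (1 + l) = p
    generalize (1 + l) ^ l = r at hrpos ⊢
    have hxne : l * Y₀ ≠ 0 := hlY₀.ne'
    field_simp
    ring
  rw [key]
  have hne : (-((1 + l) ^ (4:ℕ) * ((1 + l) ^ l) ^ (4:ℕ)) / (l * Y₀) ^ (2:ℕ)) ≠ 0 := by
    apply div_ne_zero
    · have : (0:ℝ) < (1 + l) ^ (4:ℕ) * ((1 + l) ^ l) ^ (4:ℕ) := by positivity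
      exact neg_ne_zero.mpr this.ne'
    · positivity
  constructor
  · intro h; rw [h, mul_zero]
  · intro h
    exact (mul_eq_zero.mp h).resolve_left hne
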